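/- In the KP tau-function setting, for all integers k, l and at every point of ℝ⁷, the tau functions satisfy the bilinear identity ∂_{x₁}τ_{k,l}⁽¹⁾·τ_{k,l}⁽²⁾ − τ_{k,l}⁽¹⁾·∂_{x₁}τ_{k,l}⁽²⁾ = τ_{k,l}⁽¹'²⁾·τ_{k,l}⁽⁰⁾. -/

import Mathlib

open Complex Matrix

noncomputable section

/-- Partial derivative of a function on `ℝ⁷` in the `i`-th coordinate direction.
Coordinates: `0 ↦ x₁`, `1 ↦ x₂`, `2 ↦ x₃`, `3 ↦ x₋₁⁽¹⁾`, `4 ↦ x₋₁⁽²⁾`,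
`5 ↦ y₁⁽¹⁾`, `6 ↦ y₁⁽²⁾`. -/
def pd (i : Fin 7) (f : (Fin 7 → ℝ) → ℂ) : (Fin 7 → ℝ) → ℂ :=
  fun X => deriv (fun s => f (Function.update X i s)) (X i)

/-- Border a square matrix with one extra column, one extra row, and corner entry `0`. -/
def bord {n : ℕ} (M : Matrix (Fin n) (Fin n) ℂ) (col row : Fin n → ℂ) :
    Matrix (Fin (n + 1)) (Fin (n + 1)) ℂ :=
  Matrix.of fun i j =>
    if hi : (i : ℕ) < n then
      if hj : (j : ℕ) < n then M ⟨i, hi⟩ ⟨j, hj⟩ else col ⟨i, hi⟩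
    else if hj : (j : ℕ) < n then row ⟨j, hj⟩ else 0

/-- Border a square matrix with two extra columns `c1, c2`, two extra rows `r1, r2`,
and a `2×2` zero corner block. -/
def bord2 {n : ℕ} (M : Matrix (Fin n) (Fin n) ℂ) (c1 c2 r1 r2 : Fin n → ℂ) :
    Matrix (Fin (n + 2)) (Fin (n + 2)) ℂ :=
  Matrix.of fun i j =>
    if hi : (i : ℕ) < n then
      if hj : (j : ℕ) < n then M ⟨i, hi⟩ ⟨j, hj⟩
      else if (j : ℕ) = n then c1 ⟨i, hi⟩ else c2 ⟨i, hi⟩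
    else if hj : (j : ℕ) < n then
      (if (i : ℕ) = n then r1 ⟨j, hj⟩ else r2 ⟨j, hj⟩)
    else 0

/-- The data of the KP tau-function setting. -/
structure KPData (N : ℕ) where
  a : ℂ
  b : ℂ
  p : Fin N → ℂ
  pb : Fin N → ℂ
  q : Fin N → ℂ
  qb : Fin N → ℂ
  r : Fin N → ℂ
  rb : Fin N → ℂ
  xi0 : Fin N → ℂ
  xib0 : Fin N → ℂ
  Ct : Fin N → ℂ
  Cb : Fin N → ℂ
  Dt : Fin N → ℂ
  Db : Fin N → ℂ

namespace KPData

variable {N : ℕ} (K : KPData N)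

/-- The nondegeneracy assumptions of the KP tau-function setting. -/
def Nondeg : Prop :=
  K.a ≠ 0 ∧ K.b ≠ 0 ∧
  (∀ i, K.p i ≠ K.a ∧ K.p i ≠ K.b) ∧
  (∀ i, K.pb i ≠ -K.a ∧ K.pb i ≠ -K.b) ∧
  (∀ i j, K.p i + K.pb j ≠ 0) ∧
  (∀ i j, K.q i + K.qb j ≠ 0) ∧
  (∀ i j, K.r i + K.rb j ≠ 0)

/-- The phase `ξ_i`. -/
def xi (i : Fin N) (X : Fin 7 → ℝ) : ℂ :=
  K.p i * (X 0 : ℂ) + (K.p i) ^ 2 * (X 1 : ℂ) + (K.p i) ^ 3 * (X 2 : ℂ)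
    + (X 3 : ℂ) / (K.p i - K.a) + (X 4 : ℂ) / (K.p i - K.b) + K.xi0 i

/-- The phase `ξ̄_j`. -/
def xib (j : Fin N) (X : Fin 7 → ℝ) : ℂ :=
  K.pb j * (X 0 : ℂ) - (K.pb j) ^ 2 * (X 1 : ℂ) + (K.pb j) ^ 3 * (X 2 : ℂ)
    + (X 3 : ℂ) / (K.pb j + K.a) + (X 4 : ℂ) / (K.pb j + K.b) + K.xib0 j

/-- The phase `η_i = q_i y₁⁽¹⁾`. -/
def eta (i : Fin N) (X : Fin 7 → ℝ) : ℂ := K.q i * (X 5 : ℂ)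

/-- The phase `η̄_j = q̄_j y₁⁽¹⁾`. -/
def etab (j : Fin N) (X : Fin 7 → ℝ) : ℂ := K.qb j * (X 5 : ℂ)

/-- The phase `χ_i = r_i y₁⁽²⁾`. -/
def chi (i : Fin N) (X : Fin 7 → ℝ) : ℂ := K.r i * (X 6 : ℂ)

/-- The phase `χ̄_j = r̄_j y₁⁽²⁾`. -/
def chib (j : Fin N) (X : Fin 7 → ℝ) : ℂ := K.rb j * (X 6 : ℂ)

/-- The matrix entry `m_{ij}^{k,l}` (with integer exponents `k, l`). -/
def ment (k l : ℤ) (i j : Fin N) (X : Fin 7 → ℝ) : ℂ :=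
  (1 / (K.p i + K.pb j)) * (-((K.p i - K.a) / (K.pb j + K.a))) ^ k
      * (-((K.p i - K.b) / (K.pb j + K.b))) ^ l
      * Complex.exp (K.xi i X + K.xib j X)
    + K.Ct i * K.Cb j * Complex.exp (K.eta i X + K.etab j X) / (K.q i + K.qb j)
    + K.Dt i * K.Db j * Complex.exp (K.chi i X + K.chib j X) / (K.r i + K.rb j)

/-- The vector entry `Φ_{k,l,i}`. -/
def phi (k l : ℤ) (i : Fin N) (X : Fin 7 → ℝ) : ℂ :=
  (1 - K.p i / K.a) ^ k * (1 - K.p i / K.b) ^ l * Complex.exp (K.xi i X)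

/-- The vector entry `Φ̄_{k,l,i}`. -/
def phib (k l : ℤ) (i : Fin N) (X : Fin 7 → ℝ) : ℂ :=
  (1 + K.pb i / K.a) ^ (-k) * (1 + K.pb i / K.b) ^ (-l) * Complex.exp (K.xib i X)

/-- The vector entry `Ψ_i`. -/
def psi (i : Fin N) (X : Fin 7 → ℝ) : ℂ := K.Ct i * Complex.exp (K.eta i X)

/-- The vector entry `Ψ̄_i`. -/
def psib (i : Fin N) (X : Fin 7 → ℝ) : ℂ := K.Cb i * Complex.exp (K.etab i X)

/-- The vector entry `Υ_i`. -/
def ups (i : Fin N) (X : Fin 7 → ℝ) : ℂ := K.Dt i * Complex.exp (K.chi i X)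

/-- The vector entry `Ῡ_i`. -/
def upsb (i : Fin N) (X : Fin 7 → ℝ) : ℂ := K.Db i * Complex.exp (K.chib i X)

/-- `τ_{k,l}⁽⁰⁾ = det M_{k,l}`. -/
def tau0 (k l : ℤ) (X : Fin 7 → ℝ) : ℂ :=
  (Matrix.of fun i j => K.ment k l i j X).det

/-- `τ_{k,l}⁽¹⁾`: bordered with column `Φ_{k,l}` and row `-Ψ̄ᵀ`. -/
def tau1 (k l : ℤ) (X : Fin 7 → ℝ) : ℂ :=
  (bord (Matrix.of fun i j => K.ment k l i j X)
    (fun i => K.phi k l i X) (fun j => -K.psib j X)).det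

/-- `τ̄_{k,l}⁽¹⁾`: bordered with column `Ψ` and row `-Φ̄_{k,l}ᵀ`. -/
def tau1b (k l : ℤ) (X : Fin 7 → ℝ) : ℂ :=
  (bord (Matrix.of fun i j => K.ment k l i j X)
    (fun i => K.psi i X) (fun j => -K.phib k l j X)).det

/-- `τ_{k,l}⁽²⁾`: bordered with column `Φ_{k,l}` and row `-Ῡᵀ`. -/
def tau2 (k l : ℤ) (X : Fin 7 → ℝ) : ℂ :=
  (bord (Matrix.of fun i j => K.ment k l i j X)
    (fun i => K.phi k l i X) (fun j => -K.upsb j X)).det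

/-- `τ̄_{k,l}⁽²⁾`: bordered with column `Υ` and row `-Φ̄_{k,l}ᵀ`. -/
def tau2b (k l : ℤ) (X : Fin 7 → ℝ) : ℂ :=
  (bord (Matrix.of fun i j => K.ment k l i j X)
    (fun i => K.ups i X) (fun j => -K.phib k l j X)).det

/-- `τ_{k,l}⁽¹'²⁾`: double-bordered with columns `Φ_{k,l}`, `∂_{x₁}Φ_{k,l}` and rows
`-Ῡᵀ`, `-Ψ̄ᵀ`. -/
def tau12 (k l : ℤ) (X : Fin 7 → ℝ) : ℂ :=
  (bord2 (Matrix.of fun i j => K.ment k l i j X)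
    (fun i => K.phi k l i X)
    (fun i => pd 0 (fun Y => K.phi k l i Y) X)
    (fun j => -K.upsb j X)
    (fun j => -K.psib j X)).det

end KPData

namespace KPProof

open Matrix Filter Topology Polynomial

variable {n : ℕ}

def colM (c : Fin n → ℂ) : Matrix (Fin n) (Fin 1) ℂ := Matrix.of fun i _ => c i
def rowM (r : Fin n → ℂ) : Matrix (Fin 1) (Fin n) ℂ := Matrix.of fun _ j => r j
def colM2 (c1 c2 : Fin n → ℂ) : Matrix (Fin n) (Fin 2) ℂ :=
  Matrix.of fun i a => if a = 0 then c1 i else c2 i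
def rowM2 (r1 r2 : Fin n → ℂ) : Matrix (Fin 2) (Fin n) ℂ :=
  Matrix.of fun a j => if a = 0 then r1 j else r2 j

lemma finSum_left {m k : ℕ} (i : Fin (m + k)) (h : (i:ℕ) < m) :
    finSumFinEquiv.symm i = Sum.inl ⟨i, h⟩ := by
  rw [Equiv.symm_apply_eq, finSumFinEquiv_apply_left]
  exact Fin.ext rfl

lemma finSum_right {m k : ℕ} (i : Fin (m + k)) (h : ¬ (i:ℕ) < m) :
    finSumFinEquiv.symm i = Sum.inr ⟨(i:ℕ) - m, by omega⟩ := by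
  rw [Equiv.symm_apply_eq, finSumFinEquiv_apply_right]
  exact Fin.ext (by simp; omega)

lemma bord_eq (M : Matrix (Fin n) (Fin n) ℂ) (c r : Fin n → ℂ) :
    bord M c r = (fromBlocks M (colM c) (rowM r) 0).submatrix
      finSumFinEquiv.symm finSumFinEquiv.symm := by
  ext i j
  simp only [bord, Matrix.of_apply, submatrix_apply]
  by_cases hi : (i:ℕ) < n <;> by_cases hj : (j:ℕ) < n <;>
    simp [hi, hj, finSum_left, finSum_right, colM, rowM]

lemma bord2_eq (M : Matrix (Fin n) (Fin n) ℂ) (c1 c2 r1 r2 : Fin n → ℂ) :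
    bord2 M c1 c2 r1 r2 = (fromBlocks M (colM2 c1 c2) (rowM2 r1 r2) 0).submatrix
      finSumFinEquiv.symm finSumFinEquiv.symm := by
  ext i j
  simp only [bord2, Matrix.of_apply, submatrix_apply]
  by_cases hi : (i:ℕ) < n <;> by_cases hj : (j:ℕ) < n
  · simp [hi, hj, finSum_left, finSum_right]
  · rw [finSum_left i hi, finSum_right j hj]
    have hiff : ((⟨(j:ℕ) - n, by omega⟩ : Fin 2) = 0) ↔ ((j:ℕ) = n) := by
      rw [Fin.ext_iff]; simp; omega
    by_cases hj2 : (j:ℕ) = n <;> simp [hi, hj, hj2, colM2, hiff]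
  · rw [finSum_right i hi, finSum_left j hj]
    have hiff : ((⟨(i:ℕ) - n, by omega⟩ : Fin 2) = 0) ↔ ((i:ℕ) = n) := by
      rw [Fin.ext_iff]; simp; omega
    by_cases hi2 : (i:ℕ) = n <;> simp [hi, hj, hi2, rowM2, hiff]
  · rw [finSum_right i hi, finSum_right j hj]
    simp [hi, hj]


lemma det_bord (M : Matrix (Fin n) (Fin n) ℂ) (c r : Fin n → ℂ) [Invertible M] :
    (bord M c r).det = M.det * (-(r ⬝ᵥ (⅟M).mulVec c)) := by
  rw [bord_eq, det_submatrix_equiv_self, det_fromBlocks₁₁]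
  congr 1
  rw [det_unique]
  simp [Matrix.mul_assoc, Matrix.mul_apply, Matrix.mulVec, dotProduct, colM, rowM]

lemma det_bord2 (M : Matrix (Fin n) (Fin n) ℂ) (c1 c2 r1 r2 : Fin n → ℂ) [Invertible M] :
    (bord2 M c1 c2 r1 r2).det = M.det * ((r1 ⬝ᵥ (⅟M).mulVec c1) * (r2 ⬝ᵥ (⅟M).mulVec c2)
      - (r1 ⬝ᵥ (⅟M).mulVec c2) * (r2 ⬝ᵥ (⅟M).mulVec c1)) := by
  rw [bord2_eq, det_submatrix_equiv_self, det_fromBlocks₁₁, det_fin_two]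
  congr 1
  simp [Matrix.mul_assoc, Matrix.mul_apply, Matrix.mulVec, dotProduct, colM2, rowM2]

lemma key_inv (M : Matrix (Fin n) (Fin n) ℂ) (c1 c2 r1 r2 : Fin n → ℂ) (h : IsUnit M.det) :
    (bord2 M c1 c2 r1 r2).det * M.det
      = (bord M c1 r1).det * (bord M c2 r2).det - (bord M c2 r1).det * (bord M c1 r2).det := by
  have : Invertible M := M.invertibleOfIsUnitDet h
  rw [det_bord2, det_bord, det_bord, det_bord, det_bord]
  ring

lemma eventually_isUnit_det (M : Matrix (Fin n) (Fin n) ℂ) :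
    ∀ᶠ t in 𝓝[≠] (0:ℂ), IsUnit (M + t • 1).det := by
  set P : Polynomial ℂ := (-M).charpoly with hP
  have hPm : P.Monic := Matrix.charpoly_monic _
  have hev : ∀ t : ℂ, P.eval t = (M + t • 1).det := by
    intro t
    rw [hP, Matrix.charpoly]
    have h2 : Polynomial.eval t (Matrix.charmatrix (-M)).det
        = ((Matrix.charmatrix (-M)).map (Polynomial.eval t)).det := by
      simpa [RingHom.mapMatrix_apply] using
        RingHom.map_det (Polynomial.evalRingHom t) (Matrix.charmatrix (-M))
    rw [h2]
    congr 1
    ext i j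
    by_cases hij : i = j <;>
      simp [hij, Matrix.charmatrix_apply, Matrix.map_apply, Matrix.one_apply, mul_comm, add_comm]
  have hfin : Set.Finite {t : ℂ | P.IsRoot t} := Polynomial.finite_setOf_isRoot hPm.ne_zero
  have hcl : IsClosed ({t : ℂ | P.IsRoot t} \ {0}) := (hfin.subset Set.diff_subset).isClosed
  have hmem : ({t : ℂ | P.IsRoot t} \ {0})ᶜ ∈ 𝓝[≠] (0:ℂ) :=
    mem_nhdsWithin_of_mem_nhds (hcl.isOpen_compl.mem_nhds (by simp))
  filter_upwards [hmem, self_mem_nhdsWithin] with t ht ht0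
  have : ¬ P.IsRoot t := by
    intro hr
    exact ht ⟨hr, by simpa using ht0⟩
  rw [Polynomial.IsRoot, hev] at this
  exact isUnit_iff_ne_zero.2 this

lemma key (M : Matrix (Fin n) (Fin n) ℂ) (c1 c2 r1 r2 : Fin n → ℂ) :
    (bord2 M c1 c2 r1 r2).det * M.det
      = (bord M c1 r1).det * (bord M c2 r2).det - (bord M c2 r1).det * (bord M c1 r2).det := by
  have hcM : Continuous fun t : ℂ => M + t • (1 : Matrix (Fin n) (Fin n) ℂ) := by
    apply continuous_matrix
    intro i j
    simp only [Matrix.add_apply, Matrix.smul_apply, smul_eq_mul]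
    fun_prop
  have cb : ∀ (c r : Fin n → ℂ), Continuous fun t : ℂ => (bord (M + t • 1) c r).det := by
    intro c r
    refine Continuous.matrix_det (continuous_matrix fun i j => ?_)
    simp only [bord, Matrix.of_apply]
    split_ifs <;> first
      | exact continuous_const
      | exact (continuous_apply_apply _ _).comp hcM
  have cb2 : Continuous fun t : ℂ => (bord2 (M + t • 1) c1 c2 r1 r2).det := by
    refine Continuous.matrix_det (continuous_matrix fun i j => ?_)
    simp only [bord2, Matrix.of_apply]
    split_ifs <;> first
      | exact continuous_const
      | exact (continuous_apply_apply _ _).comp hcM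
  have hdet : Continuous fun t : ℂ => (M + t • 1).det := hcM.matrix_det
  set F : ℂ → ℂ := fun t =>
    (bord2 (M + t • 1) c1 c2 r1 r2).det * (M + t • 1).det
      - ((bord (M + t • 1) c1 r1).det * (bord (M + t • 1) c2 r2).det
        - (bord (M + t • 1) c2 r1).det * (bord (M + t • 1) c1 r2).det) with hF
  have hFc : Continuous F := by
    apply Continuous.sub (cb2.mul hdet)
    exact ((cb c1 r1).mul (cb c2 r2)).sub ((cb c2 r1).mul (cb c1 r2))
  have hF0 : ∀ᶠ t in 𝓝[≠] (0:ℂ), F t = 0 := by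
    filter_upwards [eventually_isUnit_det M] with t ht
    rw [hF, sub_eq_zero]
    exact key_inv _ _ _ _ _ ht
  have h1 : Filter.Tendsto F (𝓝[≠] (0:ℂ)) (𝓝 (F 0)) :=
    (hFc.tendsto 0).mono_left nhdsWithin_le_nhds
  have h2 : Filter.Tendsto F (𝓝[≠] (0:ℂ)) (𝓝 0) :=
    Filter.Tendsto.congr' (Filter.EventuallyEq.symm hF0) tendsto_const_nhds
  have : F 0 = 0 := tendsto_nhds_unique h1 h2
  rw [hF] at this
  simpa [sub_eq_zero] using this


lemma hasDerivAt_det {B : ℝ → Matrix (Fin n) (Fin n) ℂ} {B' : Matrix (Fin n) (Fin n) ℂ} {x : ℝ}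
    (h : ∀ i j, HasDerivAt (fun s => B s i j) (B' i j) x) :
    HasDerivAt (fun s => (B s).det)
      (∑ j, (Matrix.updateCol (B x) j (fun i => B' i j)).det) x := by
  have hmain : HasDerivAt (fun s => (B s).det)
      (∑ σ : Equiv.Perm (Fin n), ((Equiv.Perm.sign σ : ℤ) : ℂ) *
        ∑ i, (∏ j ∈ Finset.univ.erase i, B x (σ j) j) * B' (σ i) i) x := by
    simp only [Matrix.det_apply']
    apply HasDerivAt.fun_sum
    intro σ _
    have hp := HasDerivAt.finset_prod (u := Finset.univ) (𝕜 := ℝ)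
      (f := fun i s => B s (σ i) i) (f' := fun i => B' (σ i) i) (x := x)
      (fun i _ => h (σ i) i)
    have := hp.const_mul (((Equiv.Perm.sign σ : ℤ) : ℂ))
    simpa [smul_eq_mul, Finset.mul_sum] using this
  convert hmain using 1
  have hdet : ∀ j, ((B x).updateCol j fun i => B' i j).det
      = ∑ σ : Equiv.Perm (Fin n), ((Equiv.Perm.sign σ : ℤ) : ℂ) *
          ((∏ i ∈ Finset.univ.erase j, B x (σ i) i) * B' (σ j) j) := by
    intro j
    rw [Matrix.det_apply']
    apply Finset.sum_congr rfl
    intro σ _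
    congr 1
    rw [← Finset.mul_prod_erase Finset.univ _ (Finset.mem_univ j),
      Matrix.updateCol_apply, if_pos rfl, mul_comm]
    congr 1
    apply Finset.prod_congr rfl
    intro i hi
    rw [Matrix.updateCol_apply, if_neg (Finset.ne_of_mem_erase hi)]
  simp only [hdet]
  rw [Finset.sum_comm]
  apply Finset.sum_congr rfl
  intro σ _
  rw [Finset.mul_sum]

end KPProof

namespace KPProof2

open KPProof

variable {N : ℕ}

lemma hda_exp_lin (a C : ℂ) (s : ℝ) :
    HasDerivAt (fun u : ℝ => Complex.exp (a * (u:ℂ) + C)) (a * Complex.exp (a * (s:ℂ) + C)) s := by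
  have h0 := ((((hasDerivAt_id ((s:ℝ):ℂ)).const_mul a).add_const C).cexp).comp_ofReal (z := s)
  simp only [id_eq] at h0
  convert h0 using 1
  ring

lemma zpow_helper {a p pb : ℂ} (ha : a ≠ 0) (hpa : p ≠ a) (hpba : pb ≠ -a) (k : ℤ) :
    (1 - p / a) ^ k * (1 + pb / a) ^ (-k) = (-((p - a) / (pb + a))) ^ k := by
  have hpba' : pb + a ≠ 0 := fun h => hpba (by linear_combination h)
  have h1 : (1 + pb / a) ≠ 0 := by
    intro h
    apply hpba
    field_simp at h
    linear_combination h
  rw [_root_.zpow_neg, ← _root_.inv_zpow, ← mul_zpow]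
  congr 1
  have e1 : (1 - p / a) = (a - p) / a := by rw [eq_div_iff ha]; field_simp
  have e2 : (1 + pb / a) = (a + pb) / a := by rw [eq_div_iff ha]; field_simp
  rw [e1, e2, inv_div, div_mul_div_comm, mul_comm (a - p) a, mul_div_mul_left _ _ ha,
    add_comm pb a, ← neg_div, neg_sub]

lemma xi_update (K : KPData N) (i : Fin N) (X : Fin 7 → ℝ) (s : ℝ) :
    K.xi i (Function.update X 0 s)
      = K.p i * (s:ℂ) + (K.xi i X - K.p i * ((X 0 : ℝ):ℂ)) := by
  simp [KPData.xi, Function.update_apply]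
  ring

lemma xib_update (K : KPData N) (j : Fin N) (X : Fin 7 → ℝ) (s : ℝ) :
    K.xib j (Function.update X 0 s)
      = K.pb j * (s:ℂ) + (K.xib j X - K.pb j * ((X 0 : ℝ):ℂ)) := by
  simp [KPData.xib, Function.update_apply]
  ring

lemma eta_update (K : KPData N) (i : Fin N) (X : Fin 7 → ℝ) (s : ℝ) :
    K.eta i (Function.update X 0 s) = K.eta i X := by
  simp [KPData.eta, Function.update_apply]

lemma etab_update (K : KPData N) (i : Fin N) (X : Fin 7 → ℝ) (s : ℝ) :
    K.etab i (Function.update X 0 s) = K.etab i X := by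
  simp [KPData.etab, Function.update_apply]

lemma chi_update (K : KPData N) (i : Fin N) (X : Fin 7 → ℝ) (s : ℝ) :
    K.chi i (Function.update X 0 s) = K.chi i X := by
  simp [KPData.chi, Function.update_apply]

lemma chib_update (K : KPData N) (i : Fin N) (X : Fin 7 → ℝ) (s : ℝ) :
    K.chib i (Function.update X 0 s) = K.chib i X := by
  simp [KPData.chib, Function.update_apply]

lemma psib_update (K : KPData N) (j : Fin N) (X : Fin 7 → ℝ) (s : ℝ) :
    K.psib j (Function.update X 0 s) = K.psib j X := by
  simp [KPData.psib, etab_update]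

lemma upsb_update (K : KPData N) (j : Fin N) (X : Fin 7 → ℝ) (s : ℝ) :
    K.upsb j (Function.update X 0 s) = K.upsb j X := by
  simp [KPData.upsb, chib_update]

lemma coeff_eq (K : KPData N) (hnd : K.Nondeg) (k l : ℤ) (i j : Fin N) (X : Fin 7 → ℝ) :
    (1 / (K.p i + K.pb j)) * (-((K.p i - K.a) / (K.pb j + K.a))) ^ k
      * (-((K.p i - K.b) / (K.pb j + K.b))) ^ l
      * ((K.p i + K.pb j) * Complex.exp (K.xi i X + K.xib j X))
    = K.phi k l i X * K.phib k l j X := by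
  obtain ⟨ha, hb, hpa, hpb, hppb, -, -⟩ := hnd
  rw [KPData.phi, KPData.phib, Complex.exp_add,
    ← zpow_helper ha (hpa i).1 (hpb j).1 k, ← zpow_helper hb (hpa i).2 (hpb j).2 l]
  have hg : K.p i + K.pb j ≠ 0 := hppb i j
  have hcancel : (1 / (K.p i + K.pb j)) * (K.p i + K.pb j) = 1 := one_div_mul_cancel hg
  linear_combination ((1 - K.p i / K.a) ^ k * (1 + K.pb j / K.a) ^ (-k)
    * (1 - K.p i / K.b) ^ l * (1 + K.pb j / K.b) ^ (-l)
    * Complex.exp (K.xi i X) * Complex.exp (K.xib j X)) * hcancel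

lemma ment_hasDeriv (K : KPData N) (hnd : K.Nondeg) (k l : ℤ) (i j : Fin N) (X : Fin 7 → ℝ) :
    HasDerivAt (fun s : ℝ => K.ment k l i j (Function.update X 0 s))
      (K.phi k l i X * K.phib k l j X) (X 0) := by
  set g : ℂ := K.p i + K.pb j with hgdef
  set C : ℂ := K.xi i X + K.xib j X - g * ((X 0 : ℝ):ℂ) with hC
  set A : ℂ := (1 / g) * (-((K.p i - K.a) / (K.pb j + K.a))) ^ k
      * (-((K.p i - K.b) / (K.pb j + K.b))) ^ l with hA
  set D : ℂ := K.Ct i * K.Cb j * Complex.exp (K.eta i X + K.etab j X) / (K.q i + K.qb j)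
      + K.Dt i * K.Db j * Complex.exp (K.chi i X + K.chib j X) / (K.r i + K.rb j) with hD
  have hfun : (fun s : ℝ => K.ment k l i j (Function.update X 0 s))
      = fun s : ℝ => A * Complex.exp (g * (s:ℂ) + C) + D := by
    funext s
    rw [KPData.ment, xi_update, xib_update, eta_update, etab_update, chi_update, chib_update]
    rw [hA, hD, hC, hgdef]
    rw [show K.p i * (s:ℂ) + (K.xi i X - K.p i * ((X 0 : ℝ):ℂ))
          + (K.pb j * (s:ℂ) + (K.xib j X - K.pb j * ((X 0 : ℝ):ℂ)))
        = (K.p i + K.pb j) * (s:ℂ)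
          + (K.xi i X + K.xib j X - (K.p i + K.pb j) * ((X 0 : ℝ):ℂ)) from by ring]
    ring
  rw [hfun]
  have h := ((hda_exp_lin g C (X 0)).const_mul A).add_const D
  refine h.congr_deriv ?_
  symm
  rw [show g * ((X 0 : ℝ):ℂ) + C = K.xi i X + K.xib j X from by rw [hC]; ring]
  rw [← coeff_eq K hnd k l i j X, hA, hgdef]

lemma phi_hasDeriv (K : KPData N) (k l : ℤ) (i : Fin N) (X : Fin 7 → ℝ) :
    HasDerivAt (fun s : ℝ => K.phi k l i (Function.update X 0 s))
      (pd 0 (fun Y => K.phi k l i Y) X) (X 0) := by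
  set c : ℂ := (1 - K.p i / K.a) ^ k * (1 - K.p i / K.b) ^ l with hc
  set C : ℂ := K.xi i X - K.p i * ((X 0 : ℝ):ℂ) with hC
  have hfun : (fun s : ℝ => K.phi k l i (Function.update X 0 s))
      = fun s : ℝ => c * Complex.exp (K.p i * (s:ℂ) + C) := by
    funext s
    rw [KPData.phi, xi_update, hc, hC]
  have h : HasDerivAt (fun s : ℝ => K.phi k l i (Function.update X 0 s))
      (c * (K.p i * Complex.exp (K.p i * ((X 0 : ℝ):ℂ) + C))) (X 0) := by
    rw [hfun]
    exact (hda_exp_lin (K.p i) C (X 0)).const_mul c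
  have hpd : pd 0 (fun Y => K.phi k l i Y) X
      = c * (K.p i * Complex.exp (K.p i * ((X 0 : ℝ):ℂ) + C)) := h.deriv
  rw [hpd]
  exact h

/-- derivative of the bordered determinant, for rows constant in the `x₁` direction. -/
lemma pd_det_bord (K : KPData N) (hnd : K.Nondeg) (k l : ℤ) (X : Fin 7 → ℝ)
    (R : Fin N → (Fin 7 → ℝ) → ℂ)
    (hR : ∀ j s, R j (Function.update X 0 s) = R j X) :
    pd 0 (fun Y => (bord (Matrix.of fun i j => K.ment k l i j Y)
        (fun i => K.phi k l i Y) (fun j => R j Y)).det) X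
      = (bord (Matrix.of fun i j => K.ment k l i j X)
        (fun i => pd 0 (fun Y => K.phi k l i Y) X) (fun j => R j X)).det := by
  classical
  set B : ℝ → Matrix (Fin (N+1)) (Fin (N+1)) ℂ := fun s =>
    bord (Matrix.of fun i j => K.ment k l i j (Function.update X 0 s))
      (fun i => K.phi k l i (Function.update X 0 s))
      (fun j => R j (Function.update X 0 s)) with hB
  set B' : Matrix (Fin (N+1)) (Fin (N+1)) ℂ :=
    bord (Matrix.of fun i j => K.phi k l i X * K.phib k l j X)
      (fun i => pd 0 (fun Y => K.phi k l i Y) X) (fun _ => 0) with hB'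
  have hBX : B (X 0) = bord (Matrix.of fun i j => K.ment k l i j X)
      (fun i => K.phi k l i X) (fun j => R j X) := by
    rw [hB]; simp [Function.update_eq_self]
  have hder : ∀ i j, HasDerivAt (fun s => B s i j) (B' i j) (X 0) := by
    intro i j
    simp only [hB, hB', bord, Matrix.of_apply]
    by_cases hi : (i:ℕ) < N <;> by_cases hj : (j:ℕ) < N
    · simp only [dif_pos hi, dif_pos hj]
      exact ment_hasDeriv K hnd k l _ _ X
    · simp only [dif_pos hi, dif_neg hj]
      exact phi_hasDeriv K k l _ X
    · simp only [dif_neg hi, dif_pos hj]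
      have : (fun s : ℝ => R ⟨(j:ℕ), hj⟩ (Function.update X 0 s))
          = fun _ : ℝ => R ⟨(j:ℕ), hj⟩ X := funext fun s => hR _ s
      rw [this]
      exact hasDerivAt_const _ _
    · simp only [dif_neg hi, dif_neg hj]
      exact hasDerivAt_const _ _
  have hd := KPProof.hasDerivAt_det hder
  have hpd : pd 0 (fun Y => (bord (Matrix.of fun i j => K.ment k l i j Y)
      (fun i => K.phi k l i Y) (fun j => R j Y)).det) X
      = ∑ j, (Matrix.updateCol (B (X 0)) j (fun i => B' i j)).det := hd.deriv
  rw [hpd, Fin.sum_univ_castSucc]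
  have hzero : ∀ j : Fin N,
      (Matrix.updateCol (B (X 0)) (Fin.castSucc j) (fun i => B' i (Fin.castSucc j))).det = 0 := by
    intro j
    have hcol : (fun i => B' i (Fin.castSucc j))
        = K.phib k l j X • (fun i => B (X 0) i (Fin.last N)) := by
      funext i
      by_cases hi : (i:ℕ) < N <;>
        simp [hB', hBX, bord, hi, Fin.coe_castSucc, Fin.val_last, Fin.is_lt, mul_comm,
          Pi.smul_apply, smul_eq_mul]
    rw [hcol, Matrix.det_updateCol_smul]
    have hne : Fin.last N ≠ Fin.castSucc j := by
      intro h
      have := congrArg Fin.val h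
      simp [Fin.val_last, Fin.coe_castSucc] at this
      omega
    rw [Matrix.det_updateCol_eq_zero hne]
    ring
  rw [Finset.sum_congr rfl (fun j _ => hzero j), Finset.sum_const_zero, zero_add]
  congr 1
  ext a b
  by_cases hb : (b:ℕ) < N
  · have hbne : b ≠ Fin.last N := by
      intro h; rw [h] at hb; simp [Fin.val_last] at hb
    rw [Matrix.updateCol_apply, if_neg hbne, hBX]
    simp [bord, hb]
  · have hbeq : b = Fin.last N := by
      apply Fin.ext; simp [Fin.val_last]; omega
    rw [Matrix.updateCol_apply, if_pos hbeq, hB']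
    simp [bord, hb, hbeq]

end KPProof2

theorem stmt16 {N : ℕ} (hN : 1 ≤ N) (K : KPData N) (hnd : K.Nondeg) :
    ∀ (k l : ℤ) (X : Fin 7 → ℝ),
      pd 0 (K.tau1 k l) X * K.tau2 k l X - K.tau1 k l X * pd 0 (K.tau2 k l) X
        = K.tau12 k l X * K.tau0 k l X := by
  intro k l X
  have h1 : pd 0 (K.tau1 k l) X = (bord (Matrix.of fun i j => K.ment k l i j X)
      (fun i => pd 0 (fun Y => K.phi k l i Y) X) (fun j => -K.psib j X)).det :=
    KPProof2.pd_det_bord K hnd k l X (fun j Y => -K.psib j Y)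
      (fun j s => by simp only [KPProof2.psib_update])
  have h2 : pd 0 (K.tau2 k l) X = (bord (Matrix.of fun i j => K.ment k l i j X)
      (fun i => pd 0 (fun Y => K.phi k l i Y) X) (fun j => -K.upsb j X)).det :=
    KPProof2.pd_det_bord K hnd k l X (fun j Y => -K.upsb j Y)
      (fun j s => by simp only [KPProof2.upsb_update])
  have hk := KPProof.key (Matrix.of fun i j => K.ment k l i j X) (fun i => K.phi k l i X)
    (fun i => pd 0 (fun Y => K.phi k l i Y) X)
    (fun j => -K.upsb j X) (fun j => -K.psib j X)
  rw [h1, h2]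
  simp only [KPData.tau1, KPData.tau2, KPData.tau12, KPData.tau0]
  linear_combination -hk

end
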